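/- Fix n ≥ 1 and a partition of {1,...,n} into blocks; suppose the blocks, listed with sizes p_1,...,p_ℓ, arise from forcing, for each block {i_1 < i_2 < ... < i_j}, that in σ ∈ S_{2n} (with σ⁻¹(i) < σ⁻¹(n+i) for all i) the value i_s + n immediately precedes i_{s-1} for all 1 < s ≤ j. Then the number of such σ equals the multinomial coefficient (n+ℓ)!/((p_1+1)!···(p_ℓ+1)!). -/

import Mathlib

open Finset Polynomial

/-- A permutation `σ` of `{0, ..., n+k-1}` satisfies the order constraints of the
word `w ∈ {r,c}^k` (where `true` encodes the letter `c` and `false` encodes `r`):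
for each `i < k`, the position of value `i` is before the position of value `n+i`
when `w i = c`, and after it when `w i = r`. -/
def StripConstraints (n k : ℕ) (w : Fin k → Bool) (σ : Equiv.Perm (Fin (n + k))) : Prop :=
  ∀ i : Fin k,
    (w i = true →
      (σ.symm ⟨i.val, by have := i.isLt; omega⟩).val
        < (σ.symm ⟨n + i.val, by have := i.isLt; omega⟩).val) ∧
    (w i = false →
      (σ.symm ⟨n + i.val, by have := i.isLt; omega⟩).val
        < (σ.symm ⟨i.val, by have := i.isLt; omega⟩).val)

instance {n k : ℕ} (w : Fin k → Bool) (σ : Equiv.Perm (Fin (n + k))) :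
    Decidable (StripConstraints n k w σ) :=
  inferInstanceAs (Decidable (∀ _ : Fin k, _ ∧ _))

/-- `σ` has no `n`-descent: `σ(j) - σ(j+1) ≤ n` for all consecutive positions. -/
def NoNDescent (n : ℕ) {m : ℕ} (σ : Equiv.Perm (Fin m)) : Prop :=
  ∀ j j' : Fin m, j'.val = j.val + 1 → (σ j).val ≤ n + (σ j').val

instance {n m : ℕ} (σ : Equiv.Perm (Fin m)) : Decidable (NoNDescent n σ) :=
  inferInstanceAs (Decidable (∀ _ _ : Fin m, _ → _))

namespace St18

section RankLemmas

variable {α : Type*} [LinearOrder α]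

theorem rank_oemb (s : Finset α) {k : ℕ} (h : s.card = k) (t : Fin k) :
    #(s.filter (· < s.orderEmbOfFin h t)) = t.1 := by
  have himg : s.filter (· < s.orderEmbOfFin h t) = (Finset.Iio t).image (s.orderEmbOfFin h) := by
    ext x
    simp only [mem_filter, mem_image, mem_Iio]
    constructor
    · rintro ⟨hxs, hlt⟩
      refine ⟨(s.orderIsoOfFin h).symm ⟨x, hxs⟩, ?_, ?_⟩
      · have hx : s.orderEmbOfFin h ((s.orderIsoOfFin h).symm ⟨x, hxs⟩) = x := by
          rw [← coe_orderIsoOfFin_apply, OrderIso.apply_symm_apply]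
        rw [← (s.orderEmbOfFin h).lt_iff_lt, hx]; exact hlt
      · rw [← coe_orderIsoOfFin_apply, OrderIso.apply_symm_apply]
    · rintro ⟨t', hlt, rfl⟩
      exact ⟨orderEmbOfFin_mem _ _ _, (s.orderEmbOfFin h).strictMono hlt⟩
  rw [himg, card_image_of_injective _ (s.orderEmbOfFin h).injective, Fin.card_Iio]

theorem exists_oemb {s : Finset α} {k : ℕ} (h : s.card = k) {x : α} (hx : x ∈ s) :
    ∃ t, s.orderEmbOfFin h t = x :=
  ⟨(s.orderIsoOfFin h).symm ⟨x, hx⟩, by rw [← coe_orderIsoOfFin_apply, OrderIso.apply_symm_apply]⟩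

theorem rank_lt {s : Finset α} {k : ℕ} (h : s.card = k) {x : α} (hx : x ∈ s) :
    #(s.filter (· < x)) < k := by
  obtain ⟨t, rfl⟩ := exists_oemb h hx
  rw [rank_oemb]; exact t.2

theorem oemb_rank {s : Finset α} {k : ℕ} (h : s.card = k) {x : α} (hx : x ∈ s) :
    s.orderEmbOfFin h ⟨#(s.filter (· < x)), rank_lt h hx⟩ = x := by
  obtain ⟨t, rfl⟩ := exists_oemb h hx
  exact congrArg _ (Fin.ext (rank_oemb s h t))

theorem rank_lt_rank_iff {s : Finset α} {k : ℕ} (h : s.card = k) {x y : α}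
    (hx : x ∈ s) (hy : y ∈ s) :
    x < y ↔ #(s.filter (· < x)) < #(s.filter (· < y)) := by
  conv_lhs => rw [← oemb_rank h hx, ← oemb_rank h hy]
  rw [(s.orderEmbOfFin h).lt_iff_lt]
  simp [Fin.lt_def]

end RankLemmas

section Main

variable {n : ℕ} (P : Finpartition (univ : Finset (Fin n)))

/-- The type of blocks. -/
abbrev Blk := {B : Finset (Fin n) // B ∈ P.parts}

/-- Number of positions in the contracted word. -/
def M : ℕ := n + P.parts.card

/-- Size of a block. -/
def jb (b : Blk P) : ℕ := b.1.card

theorem jb_pos (b : Blk P) : 1 ≤ jb P b :=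
  card_pos.mpr (P.nonempty_of_mem_parts b.2)

/-- The block containing `i`. -/
def blkOf (i : Fin n) : Blk P := ⟨P.part i, P.part_mem.mpr (mem_univ i)⟩

theorem mem_blkOf (i : Fin n) : i ∈ (blkOf P i).1 := P.mem_part (mem_univ i)

theorem blkOf_eq {b : Blk P} {i : Fin n} (hi : i ∈ b.1) : blkOf P i = b :=
  Subtype.ext (P.part_eq_of_mem b.2 hi)

/-- The `r`-th smallest element of block `b`. -/
def elt (b : Blk P) (r : Fin (jb P b)) : Fin n := b.1.orderEmbOfFin rfl r

theorem elt_mem (b : Blk P) (r : Fin (jb P b)) : elt P b r ∈ b.1 :=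
  orderEmbOfFin_mem _ _ _

theorem blkOf_elt (b : Blk P) (r : Fin (jb P b)) : blkOf P (elt P b r) = b :=
  blkOf_eq P (elt_mem P b r)

/-- The rank of `i` inside its block. -/
def rk (i : Fin n) : ℕ := #(((blkOf P i).1).filter (· < i))

theorem rk_lt (i : Fin n) : rk P i < jb P (blkOf P i) :=
  rank_lt rfl (mem_blkOf P i)

theorem rk_elt (b : Blk P) (r : Fin (jb P b)) : rk P (elt P b r) = r.1 := by
  rw [rk, blkOf_elt]
  exact rank_oemb _ rfl r

theorem elt_rk (i : Fin n) : elt P (blkOf P i) ⟨rk P i, rk_lt P i⟩ = i :=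
  oemb_rank rfl (mem_blkOf P i)

theorem eq_of_blk_rk {i i' : Fin n} (hb : blkOf P i = blkOf P i') (hr : rk P i = rk P i') :
    i = i' := by
  have hs : i' ∈ (blkOf P i).1 := by rw [hb]; exact mem_blkOf P i'
  have hri' : rk P i' = #(((blkOf P i).1).filter (· < i')) := by rw [rk, ← hb]
  rcases lt_trichotomy i i' with hlt | heq | hlt
  · exfalso
    have := (rank_lt_rank_iff (s := (blkOf P i).1) rfl (mem_blkOf P i) hs).mp hlt
    rw [← rk, ← hri'] at this; omega
  · exact heq
  · exfalso
    have := (rank_lt_rank_iff (s := (blkOf P i).1) rfl hs (mem_blkOf P i)).mp hlt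
    rw [← rk, ← hri'] at this; omega

/-- Value `i` (small letter) inside `Fin (n+n)`. -/
def vS (i : Fin n) : Fin (n + n) := ⟨i.1, by have := i.2; omega⟩

/-- Value `n + i` (big letter) inside `Fin (n+n)`. -/
def vB (i : Fin n) : Fin (n + n) := ⟨n + i.1, Nat.add_lt_add_left i.2 n⟩

/-- The small letter underlying a value. -/
def smv (v : Fin (n + n)) : Fin n :=
  ⟨v.1 % n, Nat.mod_lt _ (by have h2 := v.2; omega)⟩

theorem smv_vS (i : Fin n) : smv (vS i) = i :=
  Fin.ext (Nat.mod_eq_of_lt i.2)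

theorem smv_vB (i : Fin n) : smv (vB i) = i := by
  refine Fin.ext ?_
  show (n + i.1) % n = i.1
  rw [Nat.add_mod_left]
  exact Nat.mod_eq_of_lt i.2

theorem vB_of_big {v : Fin (n + n)} (hv : n ≤ v.1) : vB (smv v) = v := by
  refine Fin.ext ?_
  show n + v.1 % n = v.1
  have h2 := v.2
  have : v.1 % n = v.1 - n := by
    rw [Nat.mod_eq_sub_mod hv]
    exact Nat.mod_eq_of_lt (by omega)
  omega

theorem vS_of_small {v : Fin (n + n)} (hv : v.1 < n) : vS (smv v) = v := by
  refine Fin.ext ?_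
  show v.1 % n = v.1
  exact Nat.mod_eq_of_lt hv

/-- "Kept" values: big letters and maxima of blocks. -/
def isK (v : Fin (n + n)) : Prop :=
  n ≤ v.1 ∨ rk P (smv v) + 1 = jb P (blkOf P (smv v))

instance : DecidablePred (isK P) := fun _ => by unfold isK; infer_instance

/-- The `t`-th kept value of block `b`, in the order they must appear. -/
def kv (b : Blk P) (t : Fin (jb P b + 1)) : Fin (n + n) :=
  if h : t.1 = 0 then vS (elt P b ⟨jb P b - 1, by have := jb_pos P b; omega⟩)
  else vB (elt P b ⟨jb P b - t.1, by have := t.2; have := jb_pos P b; omega⟩)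

theorem isK_kv (b : Blk P) (t : Fin (jb P b + 1)) : isK P (kv P b t) := by
  rw [kv]
  split
  · right
    rw [smv_vS, rk_elt, blkOf_elt]
    show jb P b - 1 + 1 = jb P b
    have := jb_pos P b; omega
  · left
    exact Nat.le_add_right _ _

theorem blkOf_smv_kv (b : Blk P) (t : Fin (jb P b + 1)) :
    blkOf P (smv (kv P b t)) = b := by
  rw [kv]
  split
  · rw [smv_vS, blkOf_elt]
  · rw [smv_vB, blkOf_elt]

theorem vS_val (i : Fin n) : (vS i).1 = i.1 := rfl
theorem vB_val (i : Fin n) : (vB i).1 = n + i.1 := rfl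

theorem vS_ne_vB (i i' : Fin n) : vS i ≠ vB i' := by
  intro he
  have hv := congrArg Fin.val he
  rw [vS_val, vB_val] at hv
  have := i.2; omega

theorem vS_injective : Function.Injective (vS (n := n)) := by
  intro a b he
  exact Fin.ext (by have := congrArg Fin.val he; rwa [vS_val, vS_val] at this)

theorem vB_injective : Function.Injective (vB (n := n)) := by
  intro a b he
  have := congrArg Fin.val he
  rw [vB_val, vB_val] at this
  exact Fin.ext (by omega)

theorem kv_inj (b : Blk P) {t t' : Fin (jb P b + 1)} (he : kv P b t = kv P b t') : t = t' := by
  have ht := t.2; have ht' := t'.2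
  rw [kv, kv] at he
  split_ifs at he with h0 h0'
  · exact Fin.ext (by omega)
  · exact absurd he (vS_ne_vB _ _)
  · exact absurd he.symm (vS_ne_vB _ _)
  · have helt := vB_injective he
    have hr := congrArg (rk P) helt
    rw [rk_elt, rk_elt] at hr
    have hr' : jb P b - t.1 = jb P b - t'.1 := hr
    exact Fin.ext (by omega)

section Coloring

variable (h : Fin (M P) → Blk P)
  (hfib : ∀ b : Blk P, #(univ.filter (fun q => h q = b)) = jb P b + 1)

/-- The fiber of the coloring `h` over block `b`. -/
def fib (b : Blk P) : Finset (Fin (M P)) := univ.filter (fun q => h q = b)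

/-- Enumeration of the fiber of `b` in increasing order. -/
def qid (b : Blk P) (t : Fin (jb P b + 1)) : Fin (M P) :=
  (fib P h b).orderEmbOfFin (hfib b) t

theorem qid_mem (b : Blk P) (t : Fin (jb P b + 1)) : qid P h hfib b t ∈ fib P h b :=
  orderEmbOfFin_mem _ _ _

theorem h_qid (b : Blk P) (t : Fin (jb P b + 1)) : h (qid P h hfib b t) = b :=
  (mem_filter.mp (qid_mem P h hfib b t)).2

theorem qid_strictMono (b : Blk P) {t t' : Fin (jb P b + 1)} (htt : t < t') :
    qid P h hfib b t < qid P h hfib b t' :=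
  ((fib P h b).orderEmbOfFin (hfib b)).strictMono htt

/-- Rank of position `q` inside its own fiber. -/
def tk (q : Fin (M P)) : ℕ := #((fib P h (h q)).filter (· < q))

theorem mem_fib_self (q : Fin (M P)) : q ∈ fib P h (h q) :=
  mem_filter.mpr ⟨mem_univ q, rfl⟩

include hfib in
theorem tk_lt (q : Fin (M P)) : tk P h q < jb P (h q) + 1 :=
  rank_lt (hfib (h q)) (mem_fib_self P h q)

theorem tk_qid (b : Blk P) (t : Fin (jb P b + 1)) : tk P h (qid P h hfib b t) = t.1 := by
  rw [tk, h_qid P h hfib]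
  exact rank_oemb _ (hfib b) t

theorem qid_tk (q : Fin (M P)) :
    qid P h hfib (h q) ⟨tk P h q, tk_lt P h hfib q⟩ = q :=
  oemb_rank (hfib (h q)) (mem_fib_self P h q)

theorem qid_inj {b b' : Blk P} {t : Fin (jb P b + 1)} {t' : Fin (jb P b' + 1)}
    (he : qid P h hfib b t = qid P h hfib b' t') : b = b' ∧ t.1 = t'.1 := by
  have hb : b = b' := by rw [← h_qid P h hfib b t, ← h_qid P h hfib b' t', he]
  subst hb
  refine ⟨rfl, ?_⟩
  have := congrArg (tk P h) he
  rwa [tk_qid, tk_qid] at this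

/-- Length of the segment of the expanded word corresponding to position `q`. -/
def len (q : Fin (M P)) : ℕ :=
  if 0 < tk P h q ∧ tk P h q < jb P (h q) then 2 else 1

theorem one_le_len (q : Fin (M P)) : 1 ≤ len P h q := by
  rw [len]; split <;> omega

theorem len_eq_two (b : Blk P) (t : Fin (jb P b + 1)) (h0 : 0 < t.1) (hj : t.1 < jb P b) :
    len P h (qid P h hfib b t) = 2 := by
  rw [len, tk_qid P h hfib, h_qid P h hfib, if_pos ⟨h0, hj⟩]

/-- Expanded position: start of segment `q` plus offset `o`. -/
def epd (q : Fin (M P)) (o : ℕ) : ℕ := (∑ q' ∈ Finset.Iio q, len P h q') + o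

theorem epd_zero_add_one (q : Fin (M P)) : epd P h q 0 + 1 = epd P h q 1 := by
  rw [epd, epd]

theorem epd_mono {q q' : Fin (M P)} (hqq : q < q') {o : ℕ} (ho : o < len P h q) :
    epd P h q o < epd P h q' 0 := by
  have hsub : insert q (Finset.Iio q) ⊆ Finset.Iio q' := by
    intro x hx
    rcases mem_insert.mp hx with rfl | hx'
    · exact mem_Iio.mpr hqq
    · exact mem_Iio.mpr (lt_trans (mem_Iio.mp hx') hqq)
  have h1 : ∑ q'' ∈ insert q (Finset.Iio q), len P h q''
      = len P h q + ∑ q'' ∈ Finset.Iio q, len P h q'' :=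
    sum_insert (by simp)
  have h2 : ∑ q'' ∈ insert q (Finset.Iio q), len P h q'' ≤ ∑ q'' ∈ Finset.Iio q', len P h q'' :=
    sum_le_sum_of_subset hsub
  rw [epd, epd]
  omega

theorem epd_lt_total {q : Fin (M P)} {o : ℕ} (ho : o < len P h q) :
    epd P h q o < ∑ q' : Fin (M P), len P h q' := by
  have hsub : insert q (Finset.Iio q) ⊆ univ := subset_univ _
  have h1 : ∑ q'' ∈ insert q (Finset.Iio q), len P h q''
      = len P h q + ∑ q'' ∈ Finset.Iio q, len P h q'' :=
    sum_insert (by simp)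
  have h2 : ∑ q'' ∈ insert q (Finset.Iio q), len P h q'' ≤ ∑ q' : Fin (M P), len P h q' :=
    sum_le_sum_of_subset hsub
  rw [epd]
  omega

theorem aux_ite_sum (k : ℕ) (hk : 1 ≤ k) :
    ∑ x ∈ Finset.range (k + 1), (if 0 < x ∧ x < k then 2 else 1) = 2 * k := by
  rw [Finset.sum_ite]
  rw [Finset.sum_const, Finset.sum_const, smul_eq_mul, smul_eq_mul]
  have hf : (Finset.range (k + 1)).filter (fun x => 0 < x ∧ x < k) = Finset.Ioo 0 k := by
    ext x
    simp only [mem_filter, Finset.mem_range, Finset.mem_Ioo]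
    omega
  have hg : (Finset.range (k + 1)).filter (fun x => ¬(0 < x ∧ x < k)) = {0, k} := by
    ext x
    simp only [mem_filter, Finset.mem_range, Finset.mem_insert, Finset.mem_singleton]
    omega
  have hk0 : (0 : ℕ) ∉ ({k} : Finset ℕ) := by simp; omega
  rw [hf, hg, Nat.card_Ioo, Finset.card_insert_of_notMem hk0, Finset.card_singleton]
  omega

theorem len_qid_eq (b : Blk P) (t : Fin (jb P b + 1)) :
    len P h (qid P h hfib b t) = if 0 < t.1 ∧ t.1 < jb P b then 2 else 1 := by
  rw [len, tk_qid P h hfib, h_qid P h hfib]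

include hfib in
theorem sum_len : ∑ q : Fin (M P), len P h q = n + n := by
  have hfw : ∑ b : Blk P, ∑ q ∈ (univ.filter (fun q => h q = b)), len P h q
      = ∑ q : Fin (M P), len P h q := Finset.sum_fiberwise _ _ _
  have hper : ∀ b : Blk P, ∑ q ∈ (univ.filter (fun q => h q = b)), len P h q = 2 * jb P b := by
    intro b
    have hbij : ∑ q ∈ fib P h b, len P h q
        = ∑ t : Fin (jb P b + 1), len P h (qid P h hfib b t) := by
      refine (Finset.sum_bij' (fun t _ => qid P h hfib b t)
        (fun q hq => (⟨tk P h q, ?_⟩ : Fin (jb P b + 1))) ?_ ?_ ?_ ?_ ?_).symm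
      · have hb : h q = b := (mem_filter.mp hq).2
        have := tk_lt P h hfib q
        rw [hb] at this
        exact this
      · intro t _
        exact qid_mem P h hfib b t
      · intro q hq
        exact mem_univ _
      · intro t _
        exact Fin.ext (tk_qid P h hfib b t)
      · intro q hq
        have hb : h q = b := (mem_filter.mp hq).2
        subst hb
        exact qid_tk P h hfib q
      · intro t _
        rfl
    have : ∑ t : Fin (jb P b + 1), len P h (qid P h hfib b t)
        = ∑ x ∈ Finset.range (jb P b + 1), (if 0 < x ∧ x < jb P b then 2 else 1) := by
      rw [← Fin.sum_univ_eq_sum_range]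
      exact Finset.sum_congr rfl (fun t _ => len_qid_eq P h hfib b t)
    have hfib_eq : (univ.filter (fun q => h q = b)) = fib P h b := rfl
    rw [hfib_eq, hbij, this, aux_ite_sum _ (jb_pos P b)]
  have hsum : ∑ b : Blk P, 2 * jb P b = 2 * n := by
    rw [← Finset.mul_sum]
    congr 1
    have : ∑ b : Blk P, jb P b = ∑ B ∈ P.parts, B.card := Finset.sum_coe_sort _ _
    rw [this, P.sum_card_parts, card_univ, Fintype.card_fin]
  rw [← hfw]
  rw [Finset.sum_congr rfl (fun b _ => hper b), hsum]
  omega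

include hfib in
theorem epd_bound {q : Fin (M P)} {o : ℕ} (ho : o < len P h q) : epd P h q o < n + n := by
  have := epd_lt_total P h ho
  rw [sum_len P h hfib] at this
  exact this


/-- The position of each value in the expanded word determined by the coloring `h`. -/
def posN (v : Fin (n + n)) : ℕ :=
  if v.1 < n then
    (if rk P (smv v) + 1 = jb P (blkOf P (smv v)) then
      epd P h (qid P h hfib (blkOf P (smv v)) ⟨0, Nat.succ_pos _⟩) 0
    else
      epd P h (qid P h hfib (blkOf P (smv v))
        ⟨jb P (blkOf P (smv v)) - 1 - rk P (smv v), by omega⟩) 1)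
  else
    epd P h (qid P h hfib (blkOf P (smv v))
      ⟨jb P (blkOf P (smv v)) - rk P (smv v), by omega⟩) 0

include hfib in
theorem one_lt_len_mid (b : Blk P) (t : Fin (jb P b + 1)) (h0 : 0 < t.1) (hj : t.1 < jb P b) :
    1 < len P h (qid P h hfib b t) := by
  rw [len_eq_two P h hfib b t h0 hj]; omega

include hfib in
theorem one_lt_len_notmax (i : Fin n) (hmax : ¬(rk P i + 1 = jb P (blkOf P i))) :
    1 < len P h (qid P h hfib (blkOf P i) ⟨jb P (blkOf P i) - 1 - rk P i, by omega⟩) := by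
  refine one_lt_len_mid P h hfib _ _ ?_ ?_
  · show 0 < jb P (blkOf P i) - 1 - rk P i
    have := rk_lt P i; omega
  · show jb P (blkOf P i) - 1 - rk P i < jb P (blkOf P i)
    have := jb_pos P (blkOf P i); omega

include hfib in
theorem posN_lt (v : Fin (n + n)) : posN P h hfib v < n + n := by
  rw [posN]
  split_ifs with hv hmax
  · exact epd_bound P h hfib (one_le_len P h _)
  · exact epd_bound P h hfib (one_lt_len_notmax P h hfib (smv v) hmax)
  · exact epd_bound P h hfib (one_le_len P h _)

/-- The position map, as a map `Fin (n+n) → Fin (n+n)`. -/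
def posF (v : Fin (n + n)) : Fin (n + n) := ⟨posN P h hfib v, posN_lt P h hfib v⟩

theorem epd_inj {q q' : Fin (M P)} {o o' : ℕ} (ho : o < len P h q) (ho' : o' < len P h q')
    (he : epd P h q o = epd P h q' o') : q = q' ∧ o = o' := by
  rcases lt_trichotomy q q' with hlt | heq | hlt
  · have h1 := epd_mono P h hlt ho
    have h2 : epd P h q' 0 ≤ epd P h q' o' := by rw [epd, epd]; omega
    omega
  · subst heq
    refine ⟨rfl, ?_⟩
    rw [epd, epd] at he
    omega
  · have h1 := epd_mono P h hlt ho'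
    have h2 : epd P h q 0 ≤ epd P h q o := by rw [epd, epd]; omega
    omega

include hfib in
theorem posF_inj : Function.Injective (posF P h hfib) := by
  intro v v' he
  have hval : posN P h hfib v = posN P h hfib v' := congrArg Fin.val he
  by_cases hv : v.1 < n <;> by_cases hv' : v'.1 < n
  · by_cases hmax : rk P (smv v) + 1 = jb P (blkOf P (smv v)) <;>
      by_cases hmax' : rk P (smv v') + 1 = jb P (blkOf P (smv v'))
    · rw [posN, posN, if_pos hv, if_pos hv', if_pos hmax, if_pos hmax'] at hval
      obtain ⟨hq, -⟩ := epd_inj P h (one_le_len P h _) (one_le_len P h _) hval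
      obtain ⟨hb, -⟩ := qid_inj P h hfib hq
      have hjeq := congrArg (jb P) hb
      have hsm : smv v = smv v' := eq_of_blk_rk P hb (by omega)
      rw [← vS_of_small hv, ← vS_of_small hv', hsm]
    · rw [posN, posN, if_pos hv, if_pos hv', if_pos hmax, if_neg hmax'] at hval
      obtain ⟨-, hoo⟩ := epd_inj P h (one_le_len P h _)
        (one_lt_len_notmax P h hfib (smv v') hmax') hval
      omega
    · rw [posN, posN, if_pos hv, if_pos hv', if_neg hmax, if_pos hmax'] at hval
      obtain ⟨-, hoo⟩ := epd_inj P h (one_lt_len_notmax P h hfib (smv v) hmax)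
        (one_le_len P h _) hval
      omega
    · rw [posN, posN, if_pos hv, if_pos hv', if_neg hmax, if_neg hmax'] at hval
      obtain ⟨hq, -⟩ := epd_inj P h (one_lt_len_notmax P h hfib (smv v) hmax)
        (one_lt_len_notmax P h hfib (smv v') hmax') hval
      obtain ⟨hb, ht⟩ := qid_inj P h hfib hq
      have hjeq := congrArg (jb P) hb
      have ht2 : jb P (blkOf P (smv v)) - 1 - rk P (smv v)
          = jb P (blkOf P (smv v')) - 1 - rk P (smv v') := ht
      have h1 := rk_lt P (smv v); have h2 := rk_lt P (smv v')
      have hsm : smv v = smv v' := eq_of_blk_rk P hb (by omega)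
      rw [← vS_of_small hv, ← vS_of_small hv', hsm]
  · by_cases hmax : rk P (smv v) + 1 = jb P (blkOf P (smv v))
    · rw [posN, posN, if_pos hv, if_neg hv', if_pos hmax] at hval
      obtain ⟨hq, -⟩ := epd_inj P h (one_le_len P h _) (one_le_len P h _) hval
      obtain ⟨hb, ht⟩ := qid_inj P h hfib hq
      have ht2 : (0 : ℕ) = jb P (blkOf P (smv v')) - rk P (smv v') := ht
      have h2 := rk_lt P (smv v')
      omega
    · rw [posN, posN, if_pos hv, if_neg hv', if_neg hmax] at hval
      obtain ⟨-, hoo⟩ := epd_inj P h (one_lt_len_notmax P h hfib (smv v) hmax)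
        (one_le_len P h _) hval
      omega
  · by_cases hmax' : rk P (smv v') + 1 = jb P (blkOf P (smv v'))
    · rw [posN, posN, if_neg hv, if_pos hv', if_pos hmax'] at hval
      obtain ⟨hq, -⟩ := epd_inj P h (one_le_len P h _) (one_le_len P h _) hval
      obtain ⟨hb, ht⟩ := qid_inj P h hfib hq
      have ht2 : jb P (blkOf P (smv v)) - rk P (smv v) = (0 : ℕ) := ht
      have h2 := rk_lt P (smv v)
      omega
    · rw [posN, posN, if_neg hv, if_pos hv', if_neg hmax'] at hval
      obtain ⟨-, hoo⟩ := epd_inj P h (one_le_len P h _)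
        (one_lt_len_notmax P h hfib (smv v') hmax') hval
      omega
  · rw [posN, posN, if_neg hv, if_neg hv'] at hval
    obtain ⟨hq, -⟩ := epd_inj P h (one_le_len P h _) (one_le_len P h _) hval
    obtain ⟨hb, ht⟩ := qid_inj P h hfib hq
    have hjeq := congrArg (jb P) hb
    have ht2 : jb P (blkOf P (smv v)) - rk P (smv v)
        = jb P (blkOf P (smv v')) - rk P (smv v') := ht
    have h1 := rk_lt P (smv v); have h2 := rk_lt P (smv v')
    have hsm : smv v = smv v' := eq_of_blk_rk P hb (by omega)
    rw [← vB_of_big (le_of_not_gt hv), ← vB_of_big (le_of_not_gt hv'), hsm]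

/-- The permutation associated to a coloring. -/
noncomputable def mkPerm : Equiv.Perm (Fin (n + n)) :=
  (Equiv.ofBijective (posF P h hfib)
    (Finite.injective_iff_bijective.mp (posF_inj P h hfib))).symm

theorem mkPerm_symm_apply (v : Fin (n + n)) :
    (mkPerm P h hfib).symm v = posF P h hfib v := by
  rw [mkPerm, Equiv.symm_symm]
  rfl

theorem mkPerm_posF (v : Fin (n + n)) : mkPerm P h hfib (posF P h hfib v) = v := by
  rw [← mkPerm_symm_apply, Equiv.apply_symm_apply]

end Coloring


section Coloring2

variable (h : Fin (M P) → Blk P)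
  (hfib : ∀ b : Blk P, #(univ.filter (fun q => h q = b)) = jb P b + 1)

theorem qid_congr' {b b' : Blk P} (hb : b = b') {t t' : ℕ} (htt : t = t')
    (ht : t < jb P b + 1) (ht' : t' < jb P b' + 1) :
    qid P h hfib b ⟨t, ht⟩ = qid P h hfib b' ⟨t', ht'⟩ := by
  subst hb; subst htt; rfl

include hfib in
theorem posN_vB (i : Fin n) :
    posN P h hfib (vB i)
      = epd P h (qid P h hfib (blkOf P i) ⟨jb P (blkOf P i) - rk P i, by omega⟩) 0 := by
  have hnv : ¬((vB i).1 < n) := by rw [vB_val]; omega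
  rw [posN, if_neg hnv]
  congr 1
  apply qid_congr'
  · rw [smv_vB]
  · rw [smv_vB]

include hfib in
theorem posN_vS_max (i : Fin n) (hmax : rk P i + 1 = jb P (blkOf P i)) :
    posN P h hfib (vS i)
      = epd P h (qid P h hfib (blkOf P i) ⟨0, Nat.succ_pos _⟩) 0 := by
  have hv : ((vS i).1 < n) := i.2
  have hmax2 : rk P (smv (vS i)) + 1 = jb P (blkOf P (smv (vS i))) := by
    rw [smv_vS]; exact hmax
  rw [posN, if_pos hv, if_pos hmax2]
  congr 1
  apply qid_congr'
  · rw [smv_vS]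
  · rfl

include hfib in
theorem posN_vS_notmax (i : Fin n) (hmax : ¬(rk P i + 1 = jb P (blkOf P i))) :
    posN P h hfib (vS i)
      = epd P h (qid P h hfib (blkOf P i) ⟨jb P (blkOf P i) - 1 - rk P i, by omega⟩) 1 := by
  have hv : ((vS i).1 < n) := i.2
  have hmax2 : ¬(rk P (smv (vS i)) + 1 = jb P (blkOf P (smv (vS i)))) := by
    rw [smv_vS]; exact hmax
  rw [posN, if_pos hv, if_neg hmax2]
  congr 1
  apply qid_congr'
  · rw [smv_vS]
  · rw [smv_vS]

end Coloring2

/-- The property of `σ` in the theorem statement. -/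
def SP (σ : Equiv.Perm (Fin (n + n))) : Prop :=
  StripConstraints n n (fun _ => true) σ ∧
  ∀ B ∈ P.parts, ∀ x ∈ B, ∀ y ∈ B, x < y →
    (∀ z ∈ B, ¬(x < z ∧ z < y)) →
    (σ.symm ⟨n + y.val, Nat.add_lt_add_left y.isLt n⟩).val + 1
      = (σ.symm ⟨x.val, by have := x.isLt; omega⟩).val

section Coloring3

variable (h : Fin (M P) → Blk P)
  (hfib : ∀ b : Blk P, #(univ.filter (fun q => h q = b)) = jb P b + 1)

include hfib in
theorem SP_mkPerm : SP P (mkPerm P h hfib) := by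
  constructor
  · intro i
    refine ⟨fun _ => ?_, fun hf => by simp at hf⟩
    rw [mkPerm_symm_apply, mkPerm_symm_apply]
    show posN P h hfib (vS i) < posN P h hfib (vB i)
    by_cases hmax : rk P i + 1 = jb P (blkOf P i)
    · rw [posN_vS_max P h hfib i hmax, posN_vB P h hfib i]
      refine epd_mono P h (qid_strictMono P h hfib _ (Fin.mk_lt_mk.mpr ?_)) (one_le_len P h _)
      have := rk_lt P i; omega
    · rw [posN_vS_notmax P h hfib i hmax, posN_vB P h hfib i]
      refine epd_mono P h (qid_strictMono P h hfib _ (Fin.mk_lt_mk.mpr ?_))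
        (one_lt_len_notmax P h hfib i hmax)
      have := rk_lt P i; omega
  · intro B hB x hx y hy hxy hbet
    have hbx : blkOf P x = (⟨B, hB⟩ : Blk P) := blkOf_eq P hx
    have hby : blkOf P y = (⟨B, hB⟩ : Blk P) := blkOf_eq P hy
    have hrk : rk P y = rk P x + 1 := by
      rw [rk, rk, hbx, hby]
      have hins : B.filter (· < y) = insert x (B.filter (· < x)) := by
        ext z
        simp only [mem_filter, mem_insert]
        constructor
        · rintro ⟨hzb, hzy⟩
          by_cases hzx : z = x
          · exact Or.inl hzx
          · refine Or.inr ⟨hzb, ?_⟩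
            rcases lt_trichotomy z x with h1 | h1 | h1
            · exact h1
            · exact absurd h1 hzx
            · exact absurd ⟨h1, hzy⟩ (hbet z hzb)
        · rintro (rfl | ⟨hzb, hzx⟩)
          · exact ⟨hx, hxy⟩
          · exact ⟨hzb, lt_trans hzx hxy⟩
      show #(B.filter (· < y)) = #(B.filter (· < x)) + 1
      rw [hins, card_insert_of_notMem (by simp)]
    have hry : rk P y < jb P (⟨B, hB⟩ : Blk P) := by
      have := rk_lt P y; rw [hby] at this; exact this
    rw [mkPerm_symm_apply, mkPerm_symm_apply]
    have hmx : ¬(rk P x + 1 = jb P (blkOf P x)) := by rw [hbx]; omega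
    show posN P h hfib (vB y) + 1 = posN P h hfib (vS x)
    rw [posN_vB P h hfib y, posN_vS_notmax P h hfib x hmx]
    rw [← epd_zero_add_one]
    congr 2
    apply qid_congr'
    · rw [hbx, hby]
    · rw [hbx, hby, hrk]; omega

end Coloring3


theorem elt_congr {b b' : Blk P} (hb : b = b') {r r' : ℕ} (hrr : r = r')
    (h1 : r < jb P b) (h2 : r' < jb P b') : elt P b ⟨r, h1⟩ = elt P b' ⟨r', h2⟩ := by
  subst hb; subst hrr; rfl

theorem idx_lt (b : Blk P) (r : ℕ) : jb P b - 1 - r < jb P b + 1 := by omega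

theorem idx_lt' (b : Blk P) (r : ℕ) : jb P b - 1 - r < jb P b := by
  have := jb_pos P b; omega

theorem not_isK_vS (i : Fin n) (hmax : ¬(rk P i + 1 = jb P (blkOf P i))) :
    ¬ isK P (vS i) := by
  rintro (h1 | h2)
  · have h1' : n ≤ i.1 := h1
    have := i.2; omega
  · rw [smv_vS] at h2
    exact hmax h2

theorem kv_zero (b : Blk P) :
    kv P b ⟨0, Nat.succ_pos _⟩
      = vS (elt P b ⟨jb P b - 1, by have := jb_pos P b; omega⟩) := by
  rw [kv, dif_pos rfl]

theorem kv_big (b : Blk P) (t : ℕ) (h1 : 0 < t) (h2 : t < jb P b + 1) :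
    kv P b ⟨t, h2⟩ = vB (elt P b ⟨jb P b - t, by omega⟩) := by
  rw [kv, dif_neg (show ¬(t = 0) by omega)]

section Reverse

variable (σ : Equiv.Perm (Fin (n + n))) (hσ : SP P σ)

include hσ in
theorem posS (i : Fin n) : (σ.symm (vS i)).1 < (σ.symm (vB i)).1 := (hσ.1 i).1 rfl

include hσ in
theorem adjS (b : Blk P) (r : ℕ) (hr : r + 1 < jb P b) :
    (σ.symm (vB (elt P b ⟨r + 1, by omega⟩))).1 + 1
      = (σ.symm (vS (elt P b ⟨r, by omega⟩))).1 := by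
  have hx := elt_mem P b ⟨r, by omega⟩
  have hy := elt_mem P b ⟨r + 1, by omega⟩
  refine hσ.2 b.1 b.2 _ hx _ hy ?_ ?_
  · exact (b.1.orderEmbOfFin rfl).strictMono (Fin.mk_lt_mk.mpr (Nat.lt_succ_self r))
  · rintro z hz ⟨h1, h2⟩
    have hrx : #(b.1.filter (· < elt P b ⟨r, by omega⟩)) = r := rank_oemb b.1 rfl _
    have hry : #(b.1.filter (· < elt P b ⟨r + 1, by omega⟩)) = r + 1 := rank_oemb b.1 rfl _
    have h1' := (rank_lt_rank_iff (s := b.1) rfl hx hz).mp h1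
    have h2' := (rank_lt_rank_iff (s := b.1) rfl hz hy).mp h2
    omega

include hσ in
theorem chainS_adj (b : Blk P) (s : ℕ) (hs : s + 1 < jb P b + 1) :
    (σ.symm (kv P b ⟨s, by omega⟩)).1 < (σ.symm (kv P b ⟨s + 1, hs⟩)).1 := by
  by_cases h0 : s = 0
  · subst h0
    rw [show kv P b ⟨0, by omega⟩
          = vS (elt P b ⟨jb P b - 1, by have := jb_pos P b; omega⟩) from kv_zero P b,
        show kv P b ⟨0 + 1, hs⟩
          = vB (elt P b ⟨jb P b - 1, by have := jb_pos P b; omega⟩) from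
          kv_big P b (0 + 1) (by omega) hs]
    exact posS P σ hσ _
  · have hpos1 : 0 < s := by omega
    rw [show kv P b ⟨s, by omega⟩ = vB (elt P b ⟨jb P b - s, by omega⟩) from
          kv_big P b s hpos1 (by omega),
        show kv P b ⟨s + 1, hs⟩ = vB (elt P b ⟨jb P b - s - 1, by omega⟩) from
          kv_big P b (s + 1) (by omega) hs]
    have hr : (jb P b - s - 1) + 1 < jb P b := by omega
    have hadj := adjS P σ hσ b (jb P b - s - 1) hr
    have hpos := posS P σ hσ (elt P b ⟨jb P b - s - 1, by omega⟩)
    have hee : elt P b ⟨jb P b - s - 1 + 1, by omega⟩ = elt P b ⟨jb P b - s, by omega⟩ :=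
      elt_congr P rfl (by omega) _ _
    rw [hee] at hadj
    omega

include hσ in
theorem chainS (b : Blk P) (t t' : Fin (jb P b + 1)) (htt : t.1 < t'.1) :
    (σ.symm (kv P b t)).1 < (σ.symm (kv P b t')).1 := by
  obtain ⟨u, hu⟩ := t'
  induction u with
  | zero =>
    exfalso
    have h0 : t.1 < 0 := htt
    omega
  | succ w ih =>
    have htt' : t.1 < w + 1 := htt
    by_cases hw : t.1 = w
    · have ht : t = ⟨w, by omega⟩ := Fin.ext hw
      rw [ht]
      exact chainS_adj P σ hσ b w hu
    · have h1 := ih (by omega) (show t.1 < w by omega)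
      have h2 := chainS_adj P σ hσ b w hu
      omega

/-- Kept positions of `σ`. -/
def Kset : Finset (Fin (n + n)) := univ.filter (fun p => isK P (σ p))

theorem card_isK : #(univ.filter (isK P)) = M P := by
  have hsplit : univ.filter (isK P)
      = (univ.filter (fun v : Fin (n + n) => n ≤ v.1))
        ∪ (univ.filter (fun v : Fin (n + n) =>
            v.1 < n ∧ rk P (smv v) + 1 = jb P (blkOf P (smv v)))) := by
    ext v
    simp only [mem_filter, mem_union, mem_univ, true_and, isK]
    constructor
    · rintro (hv | hr)
      · exact Or.inl hv
      · by_cases hv : n ≤ v.1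
        · exact Or.inl hv
        · exact Or.inr ⟨by omega, hr⟩
    · rintro (hv | ⟨_, hr⟩)
      · exact Or.inl hv
      · exact Or.inr hr
  have hdisj : Disjoint (univ.filter (fun v : Fin (n + n) => n ≤ v.1))
      (univ.filter (fun v : Fin (n + n) =>
        v.1 < n ∧ rk P (smv v) + 1 = jb P (blkOf P (smv v)))) := by
    rw [Finset.disjoint_left]
    intro v hv hv'
    simp only [mem_filter, mem_univ, true_and] at hv hv'
    omega
  have c1 : #(univ.filter (fun v : Fin (n + n) => n ≤ v.1)) = n := by
    have himg : univ.filter (fun v : Fin (n + n) => n ≤ v.1) = image vB univ := by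
      ext v
      simp only [mem_filter, mem_image, mem_univ, true_and]
      constructor
      · intro hv
        exact ⟨smv v, vB_of_big hv⟩
      · rintro ⟨i, rfl⟩
        exact Nat.le_add_right _ _
    rw [himg, card_image_of_injective _ vB_injective, card_univ, Fintype.card_fin]
  have c2 : #(univ.filter (fun v : Fin (n + n) =>
      v.1 < n ∧ rk P (smv v) + 1 = jb P (blkOf P (smv v)))) = P.parts.card := by
    have himg : univ.filter (fun v : Fin (n + n) =>
        v.1 < n ∧ rk P (smv v) + 1 = jb P (blkOf P (smv v)))
        = image (fun b : Blk P =>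
            vS (elt P b ⟨jb P b - 1, by have := jb_pos P b; omega⟩)) univ := by
      ext v
      simp only [mem_filter, mem_image, mem_univ, true_and]
      constructor
      · rintro ⟨hv, hr⟩
        refine ⟨blkOf P (smv v), ?_⟩
        have h1 : elt P (blkOf P (smv v)) ⟨jb P (blkOf P (smv v)) - 1,
            by have := jb_pos P (blkOf P (smv v)); omega⟩ = smv v := by
          calc elt P (blkOf P (smv v)) ⟨jb P (blkOf P (smv v)) - 1, _⟩
              = elt P (blkOf P (smv v)) ⟨rk P (smv v), rk_lt P _⟩ :=
                elt_congr P rfl (by omega) _ _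
            _ = smv v := elt_rk P (smv v)
        rw [h1]
        exact vS_of_small hv
      · rintro ⟨b, rfl⟩
        constructor
        · exact (elt P b _).2
        · rw [smv_vS, rk_elt, blkOf_elt]
          show jb P b - 1 + 1 = jb P b
          have := jb_pos P b; omega
    have hinj : Function.Injective (fun b : Blk P =>
        vS (elt P b ⟨jb P b - 1, by have := jb_pos P b; omega⟩)) := by
      intro b b' he
      have h1 := vS_injective he
      have h2 := congrArg (blkOf P) h1
      rwa [blkOf_elt, blkOf_elt] at h2
    rw [himg, card_image_of_injective _ hinj, card_univ, Fintype.card_coe]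
  rw [hsplit, card_union_of_disjoint hdisj, c1, c2, M]

theorem card_Kset : #(Kset P σ) = M P := by
  rw [← card_isK P]
  apply Finset.card_bij (fun p _ => σ p)
  · intro p hp
    simp only [Kset, mem_filter, mem_univ, true_and] at hp ⊢
    exact hp
  · intro a _ a' _ he
    exact σ.injective he
  · intro v hv
    simp only [mem_filter, mem_univ, true_and] at hv
    refine ⟨σ.symm v, ?_, Equiv.apply_symm_apply σ v⟩
    simp only [Kset, mem_filter, mem_univ, true_and, Equiv.apply_symm_apply]
    exact hv

/-- Enumeration of kept positions. -/
def kap : Fin (M P) → Fin (n + n) := fun q =>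
  (Kset P σ).orderEmbOfFin (card_Kset P σ) q

theorem kap_mem (q : Fin (M P)) : kap P σ q ∈ Kset P σ := orderEmbOfFin_mem _ _ _

theorem isK_kap (q : Fin (M P)) : isK P (σ (kap P σ q)) :=
  (mem_filter.mp (kap_mem P σ q)).2

theorem kap_strictMono : StrictMono (kap P σ) :=
  ((Kset P σ).orderEmbOfFin (card_Kset P σ)).strictMono

/-- The induced coloring. -/
def hS : Fin (M P) → Blk P := fun q => blkOf P (smv (σ (kap P σ q)))

theorem hS_fib : ∀ b : Blk P, #(univ.filter (fun q => hS P σ q = b)) = jb P b + 1 := by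
  intro b
  have hVb : #(univ.filter (fun v => isK P v ∧ blkOf P (smv v) = b)) = jb P b + 1 := by
    have himg : univ.filter (fun v => isK P v ∧ blkOf P (smv v) = b)
        = image (kv P b) univ := by
      ext v
      simp only [mem_filter, mem_image, mem_univ, true_and]
      constructor
      · rintro ⟨hk, hb⟩
        rcases Nat.lt_or_ge v.1 n with hv | hv
        · have hr : rk P (smv v) + 1 = jb P (blkOf P (smv v)) := by
            rcases hk with h1 | h2
            · exfalso; have h1' : n ≤ v.1 := h1; omega
            · exact h2
          refine ⟨⟨0, Nat.succ_pos _⟩, ?_⟩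
          rw [show kv P b ⟨0, Nat.succ_pos _⟩
              = vS (elt P b ⟨jb P b - 1, by have := jb_pos P b; omega⟩) from kv_zero P b]
          have h1 : elt P b ⟨jb P b - 1, by have := jb_pos P b; omega⟩ = smv v := by
            calc elt P b ⟨jb P b - 1, by have := jb_pos P b; omega⟩
                = elt P (blkOf P (smv v)) ⟨rk P (smv v), rk_lt P _⟩ :=
                  elt_congr P hb.symm (by have := congrArg (jb P) hb; omega) _ _
              _ = smv v := elt_rk P (smv v)
          rw [h1]
          exact vS_of_small hv
        · have hrlt := rk_lt P (smv v)
          have hjeq := congrArg (jb P) hb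
          refine ⟨⟨jb P b - rk P (smv v), by omega⟩, ?_⟩
          rw [show kv P b ⟨jb P b - rk P (smv v), by omega⟩
              = vB (elt P b ⟨jb P b - (jb P b - rk P (smv v)), by omega⟩) from
              kv_big P b _ (by omega) (by omega)]
          have h1 : elt P b ⟨jb P b - (jb P b - rk P (smv v)), by omega⟩ = smv v := by
            calc elt P b ⟨jb P b - (jb P b - rk P (smv v)), by omega⟩
                = elt P (blkOf P (smv v)) ⟨rk P (smv v), rk_lt P _⟩ :=
                  elt_congr P hb.symm (by omega) _ _
              _ = smv v := elt_rk P (smv v)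
          rw [h1]
          exact vB_of_big hv
      · rintro ⟨t, rfl⟩
        exact ⟨isK_kv P b t, blkOf_smv_kv P b t⟩
    rw [himg, card_image_of_injective _ (fun t t' he => kv_inj P b he),
      card_univ, Fintype.card_fin]
  rw [← hVb]
  apply Finset.card_bij (fun q _ => σ (kap P σ q))
  · intro q hq
    simp only [mem_filter, mem_univ, true_and] at hq ⊢
    exact ⟨isK_kap P σ q, hq⟩
  · intro a _ a' _ he
    exact (kap_strictMono P σ).injective (σ.injective he)
  · intro v hv
    simp only [mem_filter, mem_univ, true_and] at hv
    obtain ⟨hk, hb⟩ := hv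
    have hmem : σ.symm v ∈ Kset P σ := by
      simp only [Kset, mem_filter, mem_univ, true_and, Equiv.apply_symm_apply]
      exact hk
    obtain ⟨q, hq⟩ := exists_oemb (card_Kset P σ) hmem
    have hkq : kap P σ q = σ.symm v := hq
    refine ⟨q, ?_, ?_⟩
    · simp only [mem_filter, mem_univ, true_and]
      show blkOf P (smv (σ (kap P σ q))) = b
      rw [hkq, Equiv.apply_symm_apply]
      exact hb
    · show σ (kap P σ q) = v
      rw [hkq, Equiv.apply_symm_apply]

include hσ in
theorem kap_qid (b : Blk P) (t : Fin (jb P b + 1)) :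
    kap P σ (qid P (hS P σ) (hS_fib P σ) b t) = σ.symm (kv P b t) := by
  have hKb : #((Kset P σ).filter (fun p => blkOf P (smv (σ p)) = b)) = jb P b + 1 := by
    rw [← hS_fib P σ b]
    refine (Finset.card_bij (fun q (_ : q ∈ univ.filter (fun q => hS P σ q = b)) => kap P σ q)
      ?_ ?_ ?_).symm
    · intro q hq
      simp only [mem_filter, mem_univ, true_and] at hq
      exact mem_filter.mpr ⟨kap_mem P σ q, hq⟩
    · intro a _ a' _ he
      exact (kap_strictMono P σ).injective he
    · intro p hp
      obtain ⟨hpK, hpb⟩ := mem_filter.mp hp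
      obtain ⟨q, hq⟩ := exists_oemb (card_Kset P σ) hpK
      have hkq : kap P σ q = p := hq
      refine ⟨q, ?_, hkq⟩
      simp only [mem_filter, mem_univ, true_and]
      show blkOf P (smv (σ (kap P σ q))) = b
      rw [hkq]
      exact hpb
  have hf1 : ∀ t : Fin (jb P b + 1),
      (fun t => kap P σ (qid P (hS P σ) (hS_fib P σ) b t)) t
        ∈ (Kset P σ).filter (fun p => blkOf P (smv (σ p)) = b) := by
    intro t
    refine mem_filter.mpr ⟨kap_mem P σ _, ?_⟩
    exact h_qid P (hS P σ) (hS_fib P σ) b t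
  have hf2 : ∀ t : Fin (jb P b + 1),
      (fun t => σ.symm (kv P b t)) t
        ∈ (Kset P σ).filter (fun p => blkOf P (smv (σ p)) = b) := by
    intro t
    refine mem_filter.mpr ⟨?_, ?_⟩
    · simp only [Kset, mem_filter, mem_univ, true_and, Equiv.apply_symm_apply]
      exact isK_kv P b t
    · rw [Equiv.apply_symm_apply]
      exact blkOf_smv_kv P b t
  have hm1 : StrictMono (fun t => kap P σ (qid P (hS P σ) (hS_fib P σ) b t)) :=
    fun t t' htt => kap_strictMono P σ (qid_strictMono P (hS P σ) (hS_fib P σ) b htt)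
  have hm2 : StrictMono (fun t => σ.symm (kv P b t)) := by
    intro t t' htt
    have := chainS P σ hσ b t t' htt
    exact this
  have he1 := orderEmbOfFin_unique hKb hf1 hm1
  have he2 := orderEmbOfFin_unique hKb hf2 hm2
  exact congrFun (he1.trans he2.symm) t

include hσ in
theorem kap_succ (q' : Fin (M P)) (h0 : 0 < tk P (hS P σ) q')
    (hj : tk P (hS P σ) q' < jb P (hS P σ q')) :
    (kap P σ q').1 + 1
      = (σ.symm (vS (elt P (hS P σ q')
          ⟨jb P (hS P σ q') - 1 - tk P (hS P σ) q', idx_lt' P _ _⟩))).1 := by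
  have htlt := tk_lt P (hS P σ) (hS_fib P σ) q'
  have hq' : qid P (hS P σ) (hS_fib P σ) (hS P σ q') ⟨tk P (hS P σ) q', htlt⟩ = q' :=
    qid_tk P (hS P σ) (hS_fib P σ) q'
  have h1 : kap P σ q' = σ.symm (kv P (hS P σ q') ⟨tk P (hS P σ) q', htlt⟩) := by
    conv_lhs => rw [← hq']
    exact kap_qid P σ hσ (hS P σ q') ⟨tk P (hS P σ) q', htlt⟩
  rw [h1]
  rw [show kv P (hS P σ q') ⟨tk P (hS P σ) q', htlt⟩
      = vB (elt P (hS P σ q') ⟨jb P (hS P σ q') - tk P (hS P σ) q', by omega⟩) from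
      kv_big P _ _ h0 htlt]
  have hr : (jb P (hS P σ q') - 1 - tk P (hS P σ) q') + 1 < jb P (hS P σ q') := by omega
  have hadj := adjS P σ hσ (hS P σ q') (jb P (hS P σ q') - 1 - tk P (hS P σ) q') hr
  have hee : elt P (hS P σ q') ⟨jb P (hS P σ q') - 1 - tk P (hS P σ) q' + 1, by omega⟩
      = elt P (hS P σ q') ⟨jb P (hS P σ q') - tk P (hS P σ) q', by omega⟩ :=
    elt_congr P rfl (by omega) _ _
  rw [hee] at hadj
  exact hadj

include hσ in
theorem imap_core (p : Fin (n + n)) (hv : (σ p).1 < n)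
    (hnm : ¬(rk P (smv (σ p)) + 1 = jb P (blkOf P (smv (σ p))))) :
    (kap P σ (qid P (hS P σ) (hS_fib P σ) (blkOf P (smv (σ p)))
      ⟨jb P (blkOf P (smv (σ p))) - 1 - rk P (smv (σ p)), idx_lt P _ _⟩)).1 + 1 = p.1 := by
  have hrlt := rk_lt P (smv (σ p))
  set q'' := qid P (hS P σ) (hS_fib P σ) (blkOf P (smv (σ p)))
      ⟨jb P (blkOf P (smv (σ p))) - 1 - rk P (smv (σ p)), idx_lt P _ _⟩ with hq''def
  have hq'' : hS P σ q'' = blkOf P (smv (σ p)) := h_qid P (hS P σ) (hS_fib P σ) _ _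
  have ht2 : tk P (hS P σ) q''
      = jb P (blkOf P (smv (σ p))) - 1 - rk P (smv (σ p)) :=
    tk_qid P (hS P σ) (hS_fib P σ) _ _
  have hj2 : jb P (hS P σ q'') = jb P (blkOf P (smv (σ p))) := congrArg (jb P) hq''
  have hjp := jb_pos P (blkOf P (smv (σ p)))
  have h0 : 0 < tk P (hS P σ) q'' := by omega
  have hjX : tk P (hS P σ) q'' < jb P (hS P σ q'') := by omega
  have hks := kap_succ P σ hσ q'' h0 hjX
  have heltX : elt P (hS P σ q'')
      ⟨jb P (hS P σ q'') - 1 - tk P (hS P σ) q'', by omega⟩ = smv (σ p) := by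
    calc elt P (hS P σ q'') ⟨jb P (hS P σ q'') - 1 - tk P (hS P σ) q'', by omega⟩
        = elt P (blkOf P (smv (σ p))) ⟨rk P (smv (σ p)), rk_lt P _⟩ :=
          elt_congr P hq'' (by omega) _ _
      _ = smv (σ p) := elt_rk P (smv (σ p))
  rw [heltX, vS_of_small hv, Equiv.symm_apply_apply] at hks
  exact hks

include hσ in
theorem jmap_core (q' : Fin (M P)) (h0 : 0 < tk P (hS P σ) q')
    (hj : tk P (hS P σ) q' < jb P (hS P σ q')) :
    ¬ isK P (σ (σ.symm (vS (elt P (hS P σ q')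
      ⟨jb P (hS P σ q') - 1 - tk P (hS P σ) q', idx_lt' P _ _⟩)))) := by
  rw [Equiv.apply_symm_apply]
  apply not_isK_vS
  rw [rk_elt, blkOf_elt]
  show ¬(jb P (hS P σ q') - 1 - tk P (hS P σ) q' + 1 = jb P (hS P σ q'))
  omega

include hσ in
theorem kap_val (q : Fin (M P)) :
    (kap P σ q).1 = epd P (hS P σ) q 0 := by
  have hIio : #(Finset.Iio (kap P σ q)) = (kap P σ q).1 := Fin.card_Iio _
  have hsplitcard := Finset.card_filter_add_card_filter_not
    (s := Finset.Iio (kap P σ q)) (p := fun p => isK P (σ p))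
  have hkept : #((Finset.Iio (kap P σ q)).filter (fun p => isK P (σ p))) = q.1 := by
    have heq : (Finset.Iio (kap P σ q)).filter (fun p => isK P (σ p))
        = (Kset P σ).filter (· < kap P σ q) := by
      ext p
      simp only [mem_filter, Finset.mem_Iio, Kset, mem_univ, true_and]
      exact ⟨fun ⟨a, c⟩ => ⟨c, a⟩, fun ⟨a, c⟩ => ⟨c, a⟩⟩
    rw [heq]
    exact rank_oemb _ (card_Kset P σ) q
  have hB : epd P (hS P σ) q 0 = q.1 + #((Finset.Iio q).filter
      (fun q' => 0 < tk P (hS P σ) q' ∧ tk P (hS P σ) q' < jb P (hS P σ q'))) := by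
    rw [epd]
    have h1 : ∀ q' ∈ Finset.Iio q, len P (hS P σ) q'
        = 1 + (if 0 < tk P (hS P σ) q' ∧ tk P (hS P σ) q' < jb P (hS P σ q')
            then 1 else 0) := by
      intro q' _
      rw [len]
      by_cases hc : 0 < tk P (hS P σ) q' ∧ tk P (hS P σ) q' < jb P (hS P σ q')
      · rw [if_pos hc, if_pos hc]
      · rw [if_neg hc, if_neg hc]
    rw [Finset.sum_congr rfl h1, Finset.sum_add_distrib, Finset.sum_const, smul_eq_mul,
      mul_one, Finset.sum_ite, Finset.sum_const, Finset.sum_const, smul_eq_mul, mul_one,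
      smul_eq_mul, Nat.mul_zero, Nat.add_zero, Nat.add_zero, Fin.card_Iio]
  have hC : #((Finset.Iio (kap P σ q)).filter (fun p => ¬ isK P (σ p)))
      = #((Finset.Iio q).filter
        (fun q' => 0 < tk P (hS P σ) q' ∧ tk P (hS P σ) q' < jb P (hS P σ q'))) := by
    refine Finset.card_bij'
      (fun p _ => qid P (hS P σ) (hS_fib P σ) (blkOf P (smv (σ p)))
        ⟨jb P (blkOf P (smv (σ p))) - 1 - rk P (smv (σ p)), idx_lt P _ _⟩)
      (fun q' _ => σ.symm (vS (elt P (hS P σ q')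
        ⟨jb P (hS P σ q') - 1 - tk P (hS P σ) q', idx_lt' P _ _⟩)))
      ?_ ?_ ?_ ?_
    · intro p hp
      obtain ⟨hpI, hnk⟩ := mem_filter.mp hp
      have hv : (σ p).1 < n := by
        by_contra hv
        exact hnk (Or.inl (le_of_not_gt hv))
      have hnm : ¬(rk P (smv (σ p)) + 1 = jb P (blkOf P (smv (σ p)))) :=
        fun hh => hnk (Or.inr hh)
      have hrlt := rk_lt P (smv (σ p))
      have hjp := jb_pos P (blkOf P (smv (σ p)))
      have ht2 : tk P (hS P σ) (qid P (hS P σ) (hS_fib P σ) (blkOf P (smv (σ p)))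
          ⟨jb P (blkOf P (smv (σ p))) - 1 - rk P (smv (σ p)), idx_lt P _ _⟩)
          = jb P (blkOf P (smv (σ p))) - 1 - rk P (smv (σ p)) :=
        tk_qid P (hS P σ) (hS_fib P σ) _ _
      have hq'' : hS P σ (qid P (hS P σ) (hS_fib P σ) (blkOf P (smv (σ p)))
          ⟨jb P (blkOf P (smv (σ p))) - 1 - rk P (smv (σ p)), idx_lt P _ _⟩)
          = blkOf P (smv (σ p)) := h_qid P (hS P σ) (hS_fib P σ) _ _
      have hjq := congrArg (jb P) hq''
      have hcore := imap_core P σ hσ p hv hnm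
      refine mem_filter.mpr ⟨?_, ?_, ?_⟩
      · rw [Finset.mem_Iio] at hpI ⊢
        have hplt : p.1 < (kap P σ q).1 := hpI
        have hlt2 : (kap P σ (qid P (hS P σ) (hS_fib P σ) (blkOf P (smv (σ p)))
            ⟨jb P (blkOf P (smv (σ p))) - 1 - rk P (smv (σ p)), idx_lt P _ _⟩)).1
            < (kap P σ q).1 := by omega
        exact (kap_strictMono P σ).lt_iff_lt.mp hlt2
      · rw [ht2]; omega
      · rw [ht2, hjq]; omega
    · intro q' hq'
      obtain ⟨hq'I, h0, hj⟩ := mem_filter.mp hq'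
      have hks := kap_succ P σ hσ q' h0 hj
      have hnk := jmap_core P σ hσ q' h0 hj
      refine mem_filter.mpr ⟨?_, hnk⟩
      rw [Finset.mem_Iio] at hq'I ⊢
      have h1 : (kap P σ q').1 < (kap P σ q).1 := kap_strictMono P σ hq'I
      have hne : σ.symm (vS (elt P (hS P σ q')
          ⟨jb P (hS P σ q') - 1 - tk P (hS P σ) q', idx_lt' P _ _⟩)) ≠ kap P σ q := by
        intro heq
        apply hnk
        rw [heq]
        exact isK_kap P σ q
      have hne' : (σ.symm (vS (elt P (hS P σ q')
          ⟨jb P (hS P σ q') - 1 - tk P (hS P σ) q', idx_lt' P _ _⟩))).1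
          ≠ (kap P σ q).1 := fun hh => hne (Fin.ext hh)
      show (σ.symm (vS (elt P (hS P σ q')
          ⟨jb P (hS P σ q') - 1 - tk P (hS P σ) q', idx_lt' P _ _⟩))).1 < (kap P σ q).1
      omega
    · intro p hp
      obtain ⟨hpI, hnk⟩ := mem_filter.mp hp
      have hv : (σ p).1 < n := by
        by_contra hv
        exact hnk (Or.inl (le_of_not_gt hv))
      have hnm : ¬(rk P (smv (σ p)) + 1 = jb P (blkOf P (smv (σ p)))) :=
        fun hh => hnk (Or.inr hh)
      have hrlt := rk_lt P (smv (σ p))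
      have hjp := jb_pos P (blkOf P (smv (σ p)))
      have hcore := imap_core P σ hσ p hv hnm
      have ht2 : tk P (hS P σ) (qid P (hS P σ) (hS_fib P σ) (blkOf P (smv (σ p)))
          ⟨jb P (blkOf P (smv (σ p))) - 1 - rk P (smv (σ p)), idx_lt P _ _⟩)
          = jb P (blkOf P (smv (σ p))) - 1 - rk P (smv (σ p)) :=
        tk_qid P (hS P σ) (hS_fib P σ) _ _
      have hq'' : hS P σ (qid P (hS P σ) (hS_fib P σ) (blkOf P (smv (σ p)))
          ⟨jb P (blkOf P (smv (σ p))) - 1 - rk P (smv (σ p)), idx_lt P _ _⟩)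
          = blkOf P (smv (σ p)) := h_qid P (hS P σ) (hS_fib P σ) _ _
      have hjq := congrArg (jb P) hq''
      have h0 : 0 < tk P (hS P σ) (qid P (hS P σ) (hS_fib P σ) (blkOf P (smv (σ p)))
          ⟨jb P (blkOf P (smv (σ p))) - 1 - rk P (smv (σ p)), idx_lt P _ _⟩) := by
        rw [ht2]; omega
      have hj : tk P (hS P σ) (qid P (hS P σ) (hS_fib P σ) (blkOf P (smv (σ p)))
            ⟨jb P (blkOf P (smv (σ p))) - 1 - rk P (smv (σ p)), idx_lt P _ _⟩)
          < jb P (hS P σ (qid P (hS P σ) (hS_fib P σ) (blkOf P (smv (σ p)))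
            ⟨jb P (blkOf P (smv (σ p))) - 1 - rk P (smv (σ p)), idx_lt P _ _⟩)) := by
        rw [ht2, hjq]; omega
      have hks := kap_succ P σ hσ _ h0 hj
      refine Fin.ext ?_
      beta_reduce
      omega
    · intro q' hq'
      obtain ⟨hq'I, h0, hj⟩ := mem_filter.mp hq'
      have hks := kap_succ P σ hσ q' h0 hj
      have hnk := jmap_core P σ hσ q' h0 hj
      have hv : (σ (σ.symm (vS (elt P (hS P σ q')
          ⟨jb P (hS P σ q') - 1 - tk P (hS P σ) q', idx_lt' P _ _⟩)))).1 < n := by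
        rw [Equiv.apply_symm_apply]
        exact (elt P (hS P σ q') _).2
      have hnm : ¬(rk P (smv (σ (σ.symm (vS (elt P (hS P σ q')
          ⟨jb P (hS P σ q') - 1 - tk P (hS P σ) q', idx_lt' P _ _⟩))))) + 1
          = jb P (blkOf P (smv (σ (σ.symm (vS (elt P (hS P σ q')
          ⟨jb P (hS P σ q') - 1 - tk P (hS P σ) q', idx_lt' P _ _⟩))))))) :=
        fun hh => hnk (Or.inr hh)
      have hcore := imap_core P σ hσ _ hv hnm
      apply (kap_strictMono P σ).injective
      refine Fin.ext ?_
      beta_reduce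
      omega
  omega

set_option maxHeartbeats 2000000 in
include hσ in
theorem mkPerm_hS : mkPerm P (hS P σ) (hS_fib P σ) = σ := by
  have hsym : ∀ v : Fin (n + n), σ.symm v = posF P (hS P σ) (hS_fib P σ) v := by
    intro v
    refine Fin.ext ?_
    show (σ.symm v).1 = posN P (hS P σ) (hS_fib P σ) v
    by_cases hv : v.1 < n
    · have hrlt := rk_lt P (smv v)
      have hjp := jb_pos P (blkOf P (smv v))
      by_cases hmax : rk P (smv v) + 1 = jb P (blkOf P (smv v))
      · rw [posN, if_pos hv, if_pos hmax]
        have hkv : kv P (blkOf P (smv v)) ⟨0, Nat.succ_pos _⟩ = v := by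
          rw [kv_zero]
          rw [show elt P (blkOf P (smv v)) ⟨jb P (blkOf P (smv v)) - 1,
              by have := jb_pos P (blkOf P (smv v)); omega⟩ = smv v from
            (elt_congr P rfl (by omega) _ _).trans (elt_rk P (smv v))]
          exact vS_of_small hv
        have h2 := kap_qid P σ hσ (blkOf P (smv v)) ⟨0, Nat.succ_pos _⟩
        have h3 := kap_val P σ hσ
          (qid P (hS P σ) (hS_fib P σ) (blkOf P (smv v)) ⟨0, Nat.succ_pos _⟩)
        rw [hkv] at h2
        rw [← h2]
        exact h3
      · rw [posN, if_pos hv, if_neg hmax]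
        have hadj := adjS P σ hσ (blkOf P (smv v)) (rk P (smv v)) (by omega)
        have hveq : vS (elt P (blkOf P (smv v)) ⟨rk P (smv v), by omega⟩) = v := by
          rw [show elt P (blkOf P (smv v)) ⟨rk P (smv v), by omega⟩ = smv v from
            (elt_congr P rfl rfl _ _).trans (elt_rk P (smv v))]
          exact vS_of_small hv
        rw [hveq] at hadj
        have hkv : kv P (blkOf P (smv v))
            ⟨jb P (blkOf P (smv v)) - 1 - rk P (smv v), idx_lt P _ _⟩
            = vB (elt P (blkOf P (smv v)) ⟨rk P (smv v) + 1, by omega⟩) := by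
          rw [kv_big P _ _ (by omega) (idx_lt P _ _)]
          exact congrArg vB (elt_congr P rfl (by omega) _ _)
        have h2 := kap_qid P σ hσ (blkOf P (smv v))
          ⟨jb P (blkOf P (smv v)) - 1 - rk P (smv v), idx_lt P _ _⟩
        have h3 := kap_val P σ hσ (qid P (hS P σ) (hS_fib P σ) (blkOf P (smv v))
          ⟨jb P (blkOf P (smv v)) - 1 - rk P (smv v), idx_lt P _ _⟩)
        rw [hkv] at h2
        have h2' := congrArg Fin.val h2
        have h4 := epd_zero_add_one P (hS P σ) (qid P (hS P σ) (hS_fib P σ)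
          (blkOf P (smv v)) ⟨jb P (blkOf P (smv v)) - 1 - rk P (smv v), idx_lt P _ _⟩)
        omega
    · rw [posN, if_neg hv]
      have hrlt := rk_lt P (smv v)
      have hkv : kv P (blkOf P (smv v))
          ⟨jb P (blkOf P (smv v)) - rk P (smv v), by omega⟩ = v := by
        rw [kv_big P _ _ (by omega) (by omega)]
        rw [show elt P (blkOf P (smv v))
            ⟨jb P (blkOf P (smv v)) - (jb P (blkOf P (smv v)) - rk P (smv v)), by omega⟩
            = smv v from (elt_congr P rfl (by omega) _ _).trans (elt_rk P (smv v))]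
        exact vB_of_big (le_of_not_gt hv)
      have h2 := kap_qid P σ hσ (blkOf P (smv v))
        ⟨jb P (blkOf P (smv v)) - rk P (smv v), by omega⟩
      have h3 := kap_val P σ hσ (qid P (hS P σ) (hS_fib P σ) (blkOf P (smv v))
        ⟨jb P (blkOf P (smv v)) - rk P (smv v), by omega⟩)
      rw [hkv] at h2
      rw [← h2]
      exact h3
  have h4 : (mkPerm P (hS P σ) (hS_fib P σ)).symm = σ.symm :=
    Equiv.ext fun v => (mkPerm_symm_apply P (hS P σ) (hS_fib P σ) v).trans (hsym v).symm
  have h5 := congrArg Equiv.symm h4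
  rwa [Equiv.symm_symm, Equiv.symm_symm] at h5

end Reverse

section Identity2

variable (h : Fin (M P) → Blk P)
  (hfib : ∀ b : Blk P, #(univ.filter (fun q => h q = b)) = jb P b + 1)

include hfib in
theorem posN_kv (b : Blk P) (t : Fin (jb P b + 1)) :
    posN P h hfib (kv P b t) = epd P h (qid P h hfib b t) 0 := by
  by_cases h0 : t.1 = 0
  · have ht : t = ⟨0, Nat.succ_pos _⟩ := Fin.ext h0
    rw [ht]
    rw [show kv P b ⟨0, Nat.succ_pos _⟩ = vS (elt P b ⟨jb P b - 1,
      by have := jb_pos P b; omega⟩) from kv_zero P b]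
    rw [posN_vS_max P h hfib _ (by
      rw [rk_elt, blkOf_elt]
      show jb P b - 1 + 1 = jb P b
      have := jb_pos P b; omega)]
    exact congrArg (fun x => epd P h x 0)
      (qid_congr' P h hfib (blkOf_elt P b _) rfl _ _)
  · have ht2 := t.2
    rw [show kv P b t = vB (elt P b ⟨jb P b - t.1, by omega⟩) from
      kv_big P b t.1 (by omega) t.2]
    rw [posN_vB P h hfib _]
    refine congrArg (fun x => epd P h x 0) ?_
    refine (qid_congr' P h hfib (blkOf_elt P b _) ?_ _ t.2)
    rw [blkOf_elt, rk_elt]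
    show jb P b - (jb P b - t.1) = t.1
    omega

include hfib in
theorem mkPerm_epd (q : Fin (M P)) :
    (mkPerm P h hfib) ⟨epd P h q 0, epd_bound P h hfib (one_le_len P h q)⟩
      = kv P (h q) ⟨tk P h q, tk_lt P h hfib q⟩ := by
  have h1 : posF P h hfib (kv P (h q) ⟨tk P h q, tk_lt P h hfib q⟩)
      = ⟨epd P h q 0, epd_bound P h hfib (one_le_len P h q)⟩ := by
    refine Fin.ext ?_
    show posN P h hfib (kv P (h q) ⟨tk P h q, tk_lt P h hfib q⟩) = epd P h q 0
    rw [posN_kv P h hfib, qid_tk P h hfib q]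
  rw [← h1, mkPerm_posF]

include hfib in
theorem kap_mkPerm (q : Fin (M P)) :
    (kap P (mkPerm P h hfib) q).1 = epd P h q 0 := by
  have hmono : StrictMono (fun q : Fin (M P) =>
      (⟨epd P h q 0, epd_bound P h hfib (one_le_len P h q)⟩ : Fin (n + n))) := by
    intro a b hab
    exact Fin.mk_lt_mk.mpr (epd_mono P h hab (one_le_len P h a))
  have hf : ∀ q : Fin (M P), (fun q : Fin (M P) =>
      (⟨epd P h q 0, epd_bound P h hfib (one_le_len P h q)⟩ : Fin (n + n))) q
      ∈ Kset P (mkPerm P h hfib) := by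
    intro q
    simp only [Kset, mem_filter, mem_univ, true_and]
    rw [mkPerm_epd P h hfib q]
    exact isK_kv P _ _
  have huniq := orderEmbOfFin_unique (card_Kset P (mkPerm P h hfib)) hf hmono
  have h2 := congrFun huniq q
  exact (congrArg Fin.val h2).symm

include hfib in
theorem hS_mkPerm : hS P (mkPerm P h hfib) = h := by
  funext q
  show blkOf P (smv ((mkPerm P h hfib) (kap P (mkPerm P h hfib) q))) = h q
  have h1 : kap P (mkPerm P h hfib) q
      = ⟨epd P h q 0, epd_bound P h hfib (one_le_len P h q)⟩ :=
    Fin.ext (kap_mkPerm P h hfib q)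
  rw [h1, mkPerm_epd P h hfib q, blkOf_smv_kv]

end Identity2


section Counting

theorem cast_aux (b : Blk P) (t : Fin (jb P b + 1)) :
    ∀ (y : (b' : Blk P) × Fin (jb P b' + 1)), y = ⟨b, t⟩ →
      ∀ (pf : y.1 = b), Fin.cast (congrArg (fun b => jb P b + 1) pf) y.2 = t := by
  rintro y rfl pf
  rfl

/-- The fiberwise bijection extracted from a global bijection. -/
def fiberEquiv (e : Fin (M P) ≃ ((b : Blk P) × Fin (jb P b + 1))) (b : Blk P) :
    {q // (e q).1 = b} ≃ Fin (jb P b + 1) where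
  toFun x := Fin.cast (congrArg (fun b => jb P b + 1) x.2) (e x.1).2
  invFun t := ⟨e.symm ⟨b, t⟩, by rw [Equiv.apply_symm_apply]⟩
  left_inv x := by
    obtain ⟨q, hq⟩ := x
    refine Subtype.ext ?_
    show e.symm ⟨b, Fin.cast _ (e q).2⟩ = q
    subst hq
    exact e.symm_apply_apply q
  right_inv t := by
    have h1 : e (e.symm ⟨b, t⟩) = ⟨b, t⟩ := e.apply_symm_apply _
    exact cast_aux P b t _ h1 (by rw [h1])

/-- Assembling a global bijection from a coloring and fiberwise bijections. -/
def masterInv (x : (h : Fin (M P) → Blk P) ×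
    ((b : Blk P) → ({q // h q = b} ≃ Fin (jb P b + 1)))) :
    Fin (M P) ≃ ((b : Blk P) × Fin (jb P b + 1)) where
  toFun q := ⟨x.1 q, x.2 (x.1 q) ⟨q, rfl⟩⟩
  invFun y := ((x.2 y.1).symm y.2).1
  left_inv q := by
    show (((x.2 (x.1 q)).symm) ((x.2 (x.1 q)) ⟨q, rfl⟩)).1 = q
    rw [Equiv.symm_apply_apply]
  right_inv y := by
    obtain ⟨b, t⟩ := y
    obtain ⟨⟨q, hq⟩, ht⟩ : ∃ z : {q // x.1 q = b}, x.2 b z = t :=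
      ⟨(x.2 b).symm t, Equiv.apply_symm_apply _ _⟩
    subst ht
    have hz : ((x.2 b).symm (x.2 b ⟨q, hq⟩)) = ⟨q, hq⟩ := Equiv.symm_apply_apply _ _
    show (⟨x.1 ((x.2 b).symm (x.2 b ⟨q, hq⟩)).1,
        x.2 (x.1 ((x.2 b).symm (x.2 b ⟨q, hq⟩)).1)
          ⟨((x.2 b).symm (x.2 b ⟨q, hq⟩)).1, rfl⟩⟩ :
      (b' : Blk P) × Fin (jb P b' + 1)) = ⟨b, x.2 b ⟨q, hq⟩⟩
    rw [hz]
    subst hq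
    rfl

/-- The master equivalence for the counting argument. -/
def masterEquiv : (Fin (M P) ≃ ((b : Blk P) × Fin (jb P b + 1)))
    ≃ ((h : Fin (M P) → Blk P) ×
        ((b : Blk P) → ({q // h q = b} ≃ Fin (jb P b + 1)))) where
  toFun e := ⟨fun q => (e q).1, fun b => fiberEquiv P e b⟩
  invFun := masterInv P
  left_inv e := by
    refine Equiv.ext fun q => ?_
    rfl
  right_inv x := by
    obtain ⟨h, g⟩ := x
    show (⟨h, fun b => fiberEquiv P (masterInv P ⟨h, g⟩) b⟩ :
      (h : Fin (M P) → Blk P) × ((b : Blk P) → ({q // h q = b} ≃ Fin (jb P b + 1))))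
      = ⟨h, g⟩
    refine congrArg (Sigma.mk h) ?_
    funext b
    refine Equiv.ext fun z => ?_
    obtain ⟨q, hq⟩ := z
    subst hq
    rfl

theorem card_items : Fintype.card ((b : Blk P) × Fin (jb P b + 1)) = M P := by
  rw [Fintype.card_sigma]
  simp only [Fintype.card_fin]
  have h1 : ∑ b : Blk P, (jb P b + 1) = ∑ B ∈ P.parts, (B.card + 1) := by
    show ∑ b : {B : Finset (Fin n) // B ∈ P.parts}, ((b : Finset (Fin n)).card + 1) = _
    exact Finset.sum_coe_sort P.parts (fun B => B.card + 1)
  rw [h1, Finset.sum_add_distrib, P.sum_card_parts, Finset.sum_const, smul_eq_mul,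
    mul_one, card_univ, Fintype.card_fin, M]

theorem card_count :
    Nat.card {h : Fin (M P) → Blk P //
        ∀ b : Blk P, #(univ.filter (fun q => h q = b)) = jb P b + 1}
      * ∏ b : Blk P, (jb P b + 1).factorial = (M P).factorial := by
  have hL : Fintype.card (Fin (M P) ≃ ((b : Blk P) × Fin (jb P b + 1)))
      = (M P).factorial := by
    rw [Fintype.card_equiv (Fintype.equivFinOfCardEq (card_items P)).symm, Fintype.card_fin]
  have hE := Fintype.card_congr (masterEquiv P)
  rw [hL] at hE
  rw [Fintype.card_sigma] at hE
  have hterm : ∀ h : Fin (M P) → Blk P,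
      Fintype.card ((b : Blk P) → ({q // h q = b} ≃ Fin (jb P b + 1)))
      = if (∀ b : Blk P, #(univ.filter (fun q => h q = b)) = jb P b + 1)
          then ∏ b : Blk P, (jb P b + 1).factorial else 0 := by
    intro h
    split_ifs with hfib
    · rw [Fintype.card_pi]
      refine Finset.prod_congr rfl (fun b _ => ?_)
      have hcard : Fintype.card {q // h q = b} = jb P b + 1 := by
        rw [Fintype.card_subtype]
        exact hfib b
      rw [Fintype.card_equiv ((Fintype.equivFinOfCardEq hcard)), hcard]
    · obtain ⟨b0, hb0⟩ := not_forall.mp hfib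
      rw [Fintype.card_eq_zero_iff]
      constructor
      intro g
      apply hb0
      have h2 := Fintype.card_congr (g b0)
      rw [Fintype.card_fin, Fintype.card_subtype] at h2
      exact h2
  rw [Finset.sum_congr rfl (fun h _ => hterm h)] at hE
  rw [Finset.sum_ite, Finset.sum_const, Finset.sum_const, smul_eq_mul, smul_eq_mul,
    Nat.mul_zero, Nat.add_zero] at hE
  have hN : Nat.card {h : Fin (M P) → Blk P //
      ∀ b : Blk P, #(univ.filter (fun q => h q = b)) = jb P b + 1}
      = #(univ.filter (fun h : Fin (M P) → Blk P =>
          ∀ b : Blk P, #(univ.filter (fun q => h q = b)) = jb P b + 1)) := by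
    rw [Nat.card_eq_fintype_card, Fintype.card_subtype]
  rw [hN]
  exact hE.symm

end Counting

end Main

end St18

theorem stmt18 (n : ℕ) (hn : 1 ≤ n) (P : Finpartition (Finset.univ : Finset (Fin n))) :
    Nat.card {σ : Equiv.Perm (Fin (n + n)) //
        StripConstraints n n (fun _ => true) σ ∧
        ∀ B ∈ P.parts, ∀ x ∈ B, ∀ y ∈ B, x < y →
          (∀ z ∈ B, ¬(x < z ∧ z < y)) →
          (σ.symm ⟨n + y.val, by have := y.isLt; omega⟩).val + 1
            = (σ.symm ⟨x.val, by have := x.isLt; omega⟩).val}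
      * ∏ B ∈ P.parts, (B.card + 1).factorial
      = (n + P.parts.card).factorial := by
  have eqv : {h : Fin (St18.M P) → St18.Blk P //
      ∀ b : St18.Blk P, #(univ.filter (fun q => h q = b)) = St18.jb P b + 1}
      ≃ {σ : Equiv.Perm (Fin (n + n)) // St18.SP P σ} :=
    { toFun := fun x => ⟨St18.mkPerm P x.1 x.2, St18.SP_mkPerm P x.1 x.2⟩
      invFun := fun s => ⟨St18.hS P s.1, St18.hS_fib P s.1⟩
      left_inv := fun x => Subtype.ext (St18.hS_mkPerm P x.1 x.2)
      right_inv := fun s => Subtype.ext (St18.mkPerm_hS P s.1 s.2) }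
  have hcard : Nat.card {σ : Equiv.Perm (Fin (n + n)) // St18.SP P σ}
      = Nat.card {h : Fin (St18.M P) → St18.Blk P //
        ∀ b : St18.Blk P, #(univ.filter (fun q => h q = b)) = St18.jb P b + 1} :=
    (Nat.card_congr eqv).symm
  have hmain := St18.card_count P
  have hprod : ∏ b : St18.Blk P, (St18.jb P b + 1).factorial
      = ∏ B ∈ P.parts, (B.card + 1).factorial := by
    show ∏ b : {B : Finset (Fin n) // B ∈ P.parts},
      (((b : Finset (Fin n)).card) + 1).factorial = _
    exact Finset.prod_coe_sort P.parts (fun B => (B.card + 1).factorial)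
  have hM : St18.M P = n + P.parts.card := rfl
  show Nat.card {σ : Equiv.Perm (Fin (n + n)) // St18.SP P σ}
      * ∏ B ∈ P.parts, (B.card + 1).factorial = (n + P.parts.card).factorial
  rw [hcard, ← hprod, ← hM]
  exact hmain
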